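/- For all j, i ≥ 0, s_j ≤ C(j, i) · s_i · s_{j−i} for every 0 ≤ i ≤ j, where s_n are the Euler zigzag numbers. -/

import Mathlib

/-- The counter `σ(G)` of a finite simple digraph given by the arc relation `A`. -/
noncomputable def digraphCounter {V : Type*} [Fintype V] (A : V → V → Prop) : ℕ :=
  Nat.card {f : V ≃ Fin (Fintype.card V) // ∀ u v, A u v → (f v : ℕ) < (f u : ℕ)}

/-- The arc relation of the staircase digraph `S_n` on vertices `v₁,…,v_n`
(here `0`-indexed): arcs `v₁→v₂, v₃→v₂, v₃→v₄, v₅→v₄, …`, i.e. each even-indexed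
(0-based) vertex points to its neighbours. -/
def staircaseArc (n : ℕ) : Fin n → Fin n → Prop :=
  fun a b => Even (a : ℕ) ∧ ((b : ℕ) = (a : ℕ) + 1 ∨ (b : ℕ) + 1 = (a : ℕ))

/-- The Euler zigzag numbers, realized as counters of staircase digraphs
(`s₀ = s₁ = 1, 1, 2, 5, 16, 61, …`). -/
noncomputable def zigzag (n : ℕ) : ℕ := digraphCounter (staircaseArc n)

namespace ZigzagAux

/-- Linear extensions as self-equivalences of `Fin n`. -/
abbrev Ext {n : ℕ} (A : Fin n → Fin n → Prop) :=
  {f : Fin n ≃ Fin n // ∀ u v, A u v → (f v : ℕ) < (f u : ℕ)}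

lemma counter_eq {n : ℕ} (A : Fin n → Fin n → Prop) :
    digraphCounter A = Nat.card (Ext A) := by
  unfold digraphCounter
  refine Nat.card_congr (Equiv.subtypeEquiv
    ((Equiv.refl (Fin n)).equivCongr (finCongr (Fintype.card_fin n))) ?_)
  intro f
  constructor <;> intro hf u v huv <;> simpa using hf u v huv

lemma card_ext_flip {n : ℕ} (A : Fin n → Fin n → Prop) :
    Nat.card (Ext fun a b => A b a) = Nat.card (Ext A) := by
  refine Nat.card_congr ⟨fun f => ⟨f.1.trans Fin.revPerm, ?_⟩,
    fun f => ⟨f.1.trans Fin.revPerm, ?_⟩, ?_, ?_⟩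
  · intro u v huv
    exact Fin.rev_lt_rev.mpr (f.2 v u huv)
  · intro u v huv
    exact Fin.rev_lt_rev.mpr (f.2 v u huv)
  · intro f
    exact Subtype.ext (Equiv.ext fun x => by simp [Fin.revPerm])
  · intro f
    exact Subtype.ext (Equiv.ext fun x => by simp [Fin.revPerm])

variable {j i : ℕ}

def low (h : i ≤ j) (k : Fin i) : Fin j := ⟨k.1, lt_of_lt_of_le k.isLt h⟩

def high (_h : i ≤ j) (k : Fin (j - i)) : Fin j := ⟨i + k.1, by have := k.isLt; omega⟩

lemma low_injective (h : i ≤ j) : Function.Injective (low h) := by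
  intro a b hab
  have : (low h a).1 = (low h b).1 := by rw [hab]
  exact Fin.ext this

def shiftArc (h : i ≤ j) : Fin (j - i) → Fin (j - i) → Prop :=
  fun a b => staircaseArc j (high h a) (high h b)

abbrev Target (h : i ≤ j) :=
  {A : Finset (Fin j) // A.card = i} × Ext (staircaseArc i) × Ext (shiftArc h)

lemma card_compl_eq (h : i ≤ j) (A : {A : Finset (Fin j) // A.card = i}) :
    (A.1ᶜ).card = j - i := by
  simp [Finset.card_compl, A.2]

def labels (h : i ≤ j) (f : Ext (staircaseArc j)) : Finset (Fin j) :=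
  Finset.univ.image fun k => f.1 (low h k)

lemma labels_card (h : i ≤ j) (f : Ext (staircaseArc j)) : (labels h f).card = i := by
  have hinj : Function.Injective fun k => f.1 (low h k) :=
    fun a b hab => low_injective h (f.1.injective hab)
  rw [labels, Finset.card_image_of_injective _ hinj, Finset.card_univ, Fintype.card_fin]

lemma mem_labels (h : i ≤ j) (f : Ext (staircaseArc j)) (k : Fin i) :
    f.1 (low h k) ∈ labels h f :=
  Finset.mem_image_of_mem _ (Finset.mem_univ k)

lemma mem_labels_compl (h : i ≤ j) (f : Ext (staircaseArc j)) (k : Fin (j - i)) :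
    f.1 (high h k) ∈ (labels h f)ᶜ := by
  rw [Finset.mem_compl]
  intro hk
  obtain ⟨k', -, hk'⟩ := Finset.mem_image.mp hk
  have heq := f.1.injective hk'
  have hval : (low h k').1 = (high h k).1 := by rw [heq]
  have := k'.isLt
  simp only [low, high] at hval
  omega

noncomputable def phi (h : i ≤ j) (f : Ext (staircaseArc j)) : Target h :=
  let A := labels h f
  let eA := A.orderIsoOfFin (labels_card h f)
  let eB := Aᶜ.orderIsoOfFin (card_compl_eq h ⟨A, labels_card h f⟩)
  let g : Fin i → Fin i := fun k => eA.symm ⟨f.1 (low h k), mem_labels h f k⟩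
  let g' : Fin (j - i) → Fin (j - i) := fun k => eB.symm ⟨f.1 (high h k), mem_labels_compl h f k⟩
  have hg : Function.Injective g := by
    intro a b hab
    have h1 : (⟨f.1 (low h a), mem_labels h f a⟩ : {x // x ∈ A}) = ⟨f.1 (low h b), _⟩ :=
      eA.symm.injective hab
    exact low_injective h (f.1.injective (Subtype.mk_eq_mk.mp h1))
  have hg' : Function.Injective g' := by
    intro a b hab
    have h1 : (⟨f.1 (high h a), mem_labels_compl h f a⟩ : {x // x ∈ Aᶜ}) = ⟨f.1 (high h b), _⟩ :=
      eB.symm.injective hab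
    have h2 := f.1.injective (Subtype.mk_eq_mk.mp h1)
    have h3 : (high h a).1 = (high h b).1 := by rw [h2]
    simp only [high] at h3
    exact Fin.ext (by omega)
  ⟨⟨A, labels_card h f⟩,
   ⟨Equiv.ofBijective g (Finite.injective_iff_bijective.mp hg), by
      intro u v huv
      refine eA.symm.lt_iff_lt.mpr ?_
      exact f.2 (low h u) (low h v) huv⟩,
   ⟨Equiv.ofBijective g' (Finite.injective_iff_bijective.mp hg'), by
      intro u v huv
      refine eB.symm.lt_iff_lt.mpr ?_
      exact f.2 (high h u) (high h v) huv⟩⟩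

noncomputable def psi (h : i ≤ j) (t : Target h) : Fin j → Fin j := fun x =>
  if hx : (x : ℕ) < i then
    ((t.1.1.orderIsoOfFin t.1.2) (t.2.1.1 ⟨x, hx⟩) : Fin j)
  else
    ((t.1.1ᶜ.orderIsoOfFin (card_compl_eq h t.1)) (t.2.2.1 ⟨x.1 - i, by
      have := x.isLt; omega⟩) : Fin j)

lemma psi_phi (h : i ≤ j) (f : Ext (staircaseArc j)) : psi h (phi h f) = ⇑f.1 := by
  funext x
  by_cases hx : (x : ℕ) < i
  · have : low h ⟨x.1, hx⟩ = x := Fin.ext rfl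
    simp only [psi, phi, dif_pos hx, Equiv.ofBijective_apply, OrderIso.apply_symm_apply, this]
    exact congrArg Subtype.val (OrderIso.apply_symm_apply _ _)
  · have : high h ⟨x.1 - i, by have := x.isLt; omega⟩ = x := Fin.ext (by simp [high]; omega)
    simp only [psi, phi, dif_neg hx, Equiv.ofBijective_apply, OrderIso.apply_symm_apply, this]
    exact congrArg Subtype.val (OrderIso.apply_symm_apply _ _)

lemma phi_injective (h : i ≤ j) : Function.Injective (phi h) := by
  intro f f' hff
  have : psi h (phi h f) = psi h (phi h f') := by rw [hff]
  rw [psi_phi, psi_phi] at this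
  exact Subtype.ext (DFunLike.coe_injective this)

lemma shiftArc_even (h : i ≤ j) (hi : Even i) : shiftArc h = staircaseArc (j - i) := by
  funext a b
  apply propext
  simp only [shiftArc, staircaseArc, high, Nat.even_iff] at *
  omega

lemma shiftArc_odd (h : i ≤ j) (hi : ¬ Even i) :
    shiftArc h = fun a b => staircaseArc (j - i) b a := by
  funext a b
  apply propext
  simp only [shiftArc, staircaseArc, high, Nat.even_iff] at *
  omega

lemma card_shiftArc (h : i ≤ j) : Nat.card (Ext (shiftArc h)) = zigzag (j - i) := by
  rw [zigzag, counter_eq]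
  rcases Nat.even_or_odd i with hi | hi
  · rw [shiftArc_even h hi]
  · rw [shiftArc_odd h (by simpa [Nat.not_even_iff_odd] using hi)]
    exact card_ext_flip _

lemma card_target (h : i ≤ j) :
    Nat.card (Target h) = j.choose i * zigzag i * zigzag (j - i) := by
  rw [Nat.card_prod, Nat.card_prod, card_shiftArc h, ← counter_eq,
    Nat.card_eq_fintype_card, Fintype.card_finset_len, Fintype.card_fin, mul_assoc]
  rfl

end ZigzagAux

/-- `s_j ≤ C(j,i)·s_i·s_{j−i}` for all `0 ≤ i ≤ j`. -/
theorem zigzag_le (j i : ℕ) (h : i ≤ j) :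
    zigzag j ≤ j.choose i * zigzag i * zigzag (j - i) := by
  calc zigzag j = Nat.card (ZigzagAux.Ext (staircaseArc j)) := ZigzagAux.counter_eq _
    _ ≤ Nat.card (ZigzagAux.Target h) :=
        Nat.card_le_card_of_injective _ (ZigzagAux.phi_injective h)
    _ = j.choose i * zigzag i * zigzag (j - i) := ZigzagAux.card_target h
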